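/- Let A be a 4-by-4 reciprocal matrix. Then for all θ, λ ∈ ℝ, writing ρ = cos²θ: det(Re(e^{iθ}A) − λI₄) = λ⁴ − (ξ₁ + ξ₂ + ξ₃ + 3ρ)λ² + (ξ₁ + ρ)(ξ₃ + ρ). -/

import Mathlib

open Matrix Polynomial

def IsReciprocal {n : ℕ} (A : Matrix (Fin n) (Fin n) ℂ) : Prop :=
  (∀ i j : Fin n, ((i : ℤ) - (j : ℤ)) ^ 2 ≠ 1 → A i j = 0) ∧
  ∀ i j : Fin n, (j : ℕ) = (i : ℕ) + 1 → A i j * A j i = 1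

noncomputable def RePart {n : ℕ} (θ : ℝ) (A : Matrix (Fin n) (Fin n) ℂ) :
    Matrix (Fin n) (Fin n) ℂ :=
  (2 : ℂ)⁻¹ • (Complex.exp (θ * Complex.I) • A + (Complex.exp (θ * Complex.I) • A)ᴴ)

lemma key_prod (E F a b a' b' : ℂ) (x y c : ℝ)
    (hEF : E * F = 1) (hab : a * b = 1) (hab' : a' * b' = 1)
    (ha : a * a' = (x:ℂ)^2) (hb : b * b' = (y:ℂ)^2) (hxy : (x:ℂ)*(y:ℂ) = 1)
    (hc : E + F = 2*(c:ℂ)) :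
    (2⁻¹*(E*a) + 2⁻¹*(F*b')) * (2⁻¹*(E*b) + 2⁻¹*(F*a'))
      = (((x - y)^2/4 + c^2 : ℝ) : ℂ) := by
  have hsum : E^2 + F^2 = 4*(c:ℂ)^2 - 2 := by
    linear_combination (E+F+2*(c:ℂ))*hc - 2*hEF
  push_cast
  linear_combination (4⁻¹*E*F)*ha + (4⁻¹*E*F)*hb + (4⁻¹*E^2)*hab + (4⁻¹*F^2)*hab'
    + (4⁻¹*((x:ℂ)^2+(y:ℂ)^2))*hEF + 4⁻¹*hsum + 2⁻¹*hxy

lemma key2 (θ : ℝ) (a b : ℂ) (hab : a * b = 1) :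
    (2⁻¹*(Complex.exp (θ*Complex.I)*a)
      + 2⁻¹*((starRingEnd ℂ) (Complex.exp (θ*Complex.I)) * (starRingEnd ℂ) b)) *
    (2⁻¹*(Complex.exp (θ*Complex.I)*b)
      + 2⁻¹*((starRingEnd ℂ) (Complex.exp (θ*Complex.I)) * (starRingEnd ℂ) a))
      = (((‖a‖ - ‖b‖)^2/4 + Real.cos θ^2 : ℝ):ℂ) := by
  apply key_prod
  · rw [Complex.mul_conj, Complex.normSq_eq_norm_sq, Complex.norm_exp_ofReal_mul_I]; norm_num
  · exact hab
  · rw [← _root_.map_mul, hab, _root_.map_one]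
  · rw [Complex.mul_conj, Complex.normSq_eq_norm_sq]; push_cast; ring
  · rw [Complex.mul_conj, Complex.normSq_eq_norm_sq]; push_cast; ring
  · rw [← Complex.ofReal_mul, ← norm_mul, hab, norm_one, Complex.ofReal_one]
  · rw [← Complex.exp_conj, _root_.map_mul, Complex.conj_ofReal, Complex.conj_I, mul_neg,
      ← neg_mul, Complex.exp_mul_I, Complex.exp_mul_I, Complex.ofReal_cos]
    simp [Complex.cos_neg, Complex.sin_neg]
    ring

set_option maxHeartbeats 1000000 in
lemma det4_tri (d a b c a' b' c' : ℂ) :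
    (!![d, a, 0, 0; a', d, b, 0; 0, b', d, c; 0, 0, c', d]).det
      = d^4 - (a*a' + b*b' + c*c')*d^2 + (a*a')*(c*c') := by
  simp [Matrix.det_succ_row_zero, Fin.sum_univ_succ, Fin.succAbove,
    Matrix.submatrix_apply]
  ring

set_option maxHeartbeats 1000000 in
theorem kippenhahn_poly_four (A : Matrix (Fin 4) (Fin 4) ℂ) (hA : IsReciprocal A)
    (ξ₁ ξ₂ ξ₃ : ℝ)
    (h1 : ξ₁ = (‖A 0 1‖ - ‖A 1 0‖) ^ 2 / 4)
    (h2 : ξ₂ = (‖A 1 2‖ - ‖A 2 1‖) ^ 2 / 4)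
    (h3 : ξ₃ = (‖A 2 3‖ - ‖A 3 2‖) ^ 2 / 4) :
    ∀ θ lam : ℝ,
      (RePart θ A - (lam : ℂ) • 1).det =
        ((lam ^ 4 - (ξ₁ + ξ₂ + ξ₃ + 3 * Real.cos θ ^ 2) * lam ^ 2
            + (ξ₁ + Real.cos θ ^ 2) * (ξ₃ + Real.cos θ ^ 2) : ℝ) : ℂ) := by
  subst h1 h2 h3
  intro θ lam
  obtain ⟨hz, hp⟩ := hA
  have z00 : A 0 0 = 0 := hz 0 0 (by decide)
  have z11 : A 1 1 = 0 := hz 1 1 (by decide)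
  have z22 : A 2 2 = 0 := hz 2 2 (by decide)
  have z33 : A 3 3 = 0 := hz 3 3 (by decide)
  have z02 : A 0 2 = 0 := hz 0 2 (by decide)
  have z20 : A 2 0 = 0 := hz 2 0 (by decide)
  have z03 : A 0 3 = 0 := hz 0 3 (by decide)
  have z30 : A 3 0 = 0 := hz 3 0 (by decide)
  have z13 : A 1 3 = 0 := hz 1 3 (by decide)
  have z31 : A 3 1 = 0 := hz 3 1 (by decide)
  have k1 := key2 θ (A 0 1) (A 1 0) (hp 0 1 rfl)
  have k2 := key2 θ (A 1 2) (A 2 1) (hp 1 2 rfl)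
  have k3 := key2 θ (A 2 3) (A 3 2) (hp 2 3 rfl)
  have hM : RePart θ A - (lam : ℂ) • 1 =
      !![-(lam:ℂ),
         2⁻¹*(Complex.exp (θ*Complex.I)*(A 0 1))
           + 2⁻¹*((starRingEnd ℂ) (Complex.exp (θ*Complex.I)) * (starRingEnd ℂ) (A 1 0)), 0, 0;
         2⁻¹*(Complex.exp (θ*Complex.I)*(A 1 0))
           + 2⁻¹*((starRingEnd ℂ) (Complex.exp (θ*Complex.I)) * (starRingEnd ℂ) (A 0 1)),
         -(lam:ℂ),
         2⁻¹*(Complex.exp (θ*Complex.I)*(A 1 2))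
           + 2⁻¹*((starRingEnd ℂ) (Complex.exp (θ*Complex.I)) * (starRingEnd ℂ) (A 2 1)), 0;
         0,
         2⁻¹*(Complex.exp (θ*Complex.I)*(A 2 1))
           + 2⁻¹*((starRingEnd ℂ) (Complex.exp (θ*Complex.I)) * (starRingEnd ℂ) (A 1 2)),
         -(lam:ℂ),
         2⁻¹*(Complex.exp (θ*Complex.I)*(A 2 3))
           + 2⁻¹*((starRingEnd ℂ) (Complex.exp (θ*Complex.I)) * (starRingEnd ℂ) (A 3 2));
         0, 0,
         2⁻¹*(Complex.exp (θ*Complex.I)*(A 3 2))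
           + 2⁻¹*((starRingEnd ℂ) (Complex.exp (θ*Complex.I)) * (starRingEnd ℂ) (A 2 3)),
         -(lam:ℂ)] := by
    ext i j
    fin_cases i <;> fin_cases j <;>
      simp [RePart, Matrix.one_apply, z00, z11, z22, z33, z02, z20, z03, z30, z13, z31,
        _root_.map_mul, mul_add, Matrix.vecHead, Matrix.vecTail]
  rw [hM, det4_tri, k1, k2, k3]
  push_cast
  ring
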